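/- For fixed distributions p and q on a measurable space X, the functional D ↦ E_{x~p}[log D(x)] + E_{x~q}[log(1 - D(x))] over measurable functions D : X → (0,1) is maximized pointwise by D*(x) = p(x) / (p(x) + q(x)), where p and q denote densities with respect to a common dominating measure. -/

import Mathlib

open MeasureTheory

lemma gan_pointwise (a b t : ℝ) (ha : 0 ≤ a) (hb : 0 ≤ b) (hab : 0 < a + b)
    (ht : t ∈ Set.Ioo (0 : ℝ) 1) :
    a * Real.log t + b * Real.log (1 - t) ≤
      a * Real.log (a / (a + b)) + b * Real.log (1 - a / (a + b)) := by
  obtain ⟨ht0, ht1⟩ := ht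
  have h1t : 0 < 1 - t := by linarith
  have habne : a + b ≠ 0 := ne_of_gt hab
  have hrw : 1 - a / (a + b) = b / (a + b) := by field_simp; ring
  rw [hrw]
  rcases eq_or_lt_of_le ha with ha0 | ha0
  · simp only [← ha0, zero_mul, zero_add, Real.log_zero, mul_zero]
    have hb0 : 0 < b := by linarith
    rw [div_self (by linarith : b ≠ 0), Real.log_one, mul_zero]
    have : Real.log (1 - t) ≤ 0 := Real.log_nonpos (by linarith) (by linarith)
    nlinarith
  rcases eq_or_lt_of_le hb with hb0 | hb0
  · simp only [← hb0, zero_mul, add_zero, Real.log_zero, mul_zero]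
    rw [div_self (by linarith : a ≠ 0), Real.log_one, mul_zero]
    have : Real.log t ≤ 0 := Real.log_nonpos (le_of_lt ht0) (le_of_lt ht1)
    nlinarith
  -- main case a, b > 0
  have key1 : Real.log t - Real.log (a / (a + b)) ≤ t * (a + b) / a - 1 := by
    have : Real.log t - Real.log (a / (a + b)) = Real.log (t / (a / (a + b))) := by
      rw [Real.log_div (ne_of_gt ht0) (by positivity)]
    rw [this]
    have h2 : t / (a / (a + b)) = t * (a + b) / a := by field_simp
    rw [h2]
    exact Real.log_le_sub_one_of_pos (by positivity)
  have key2 : Real.log (1 - t) - Real.log (b / (a + b)) ≤ (1 - t) * (a + b) / b - 1 := by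
    have : Real.log (1 - t) - Real.log (b / (a + b)) = Real.log ((1 - t) / (b / (a + b))) := by
      rw [Real.log_div (ne_of_gt h1t) (by positivity)]
    rw [this]
    have h2 : (1 - t) / (b / (a + b)) = (1 - t) * (a + b) / b := by field_simp
    rw [h2]
    exact Real.log_le_sub_one_of_pos (by positivity)
  have e1 : a * (t * (a + b) / a - 1) = t * (a + b) - a := by field_simp
  have e2 : b * ((1 - t) * (a + b) / b - 1) = (1 - t) * (a + b) - b := by field_simp
  nlinarith [mul_le_mul_of_nonneg_left key1 ha, mul_le_mul_of_nonneg_left key2 hb]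

/-- GAN optimal discriminator: for fixed densities `f` (of `p`) and `g` (of `q`) with respect to
a common dominating σ-finite measure `μ`, the functional
`D ↦ E_{x~p}[log D(x)] + E_{x~q}[log (1 - D(x))]` over measurable `D : X → (0,1)`
is maximized by the pointwise maximizer `D*(x) = f x / (f x + g x)`. -/
theorem gan_optimal_discriminator
    {X : Type*} [MeasurableSpace X] (μ : Measure X) [SigmaFinite μ]
    (f g : X → ℝ) (hfm : Measurable f) (hgm : Measurable g)
    (hf : ∀ x, 0 ≤ f x) (hg : ∀ x, 0 ≤ g x) (hfg : ∀ x, 0 < f x + g x)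
    (hfprob : ∫ x, f x ∂μ = 1) (hgprob : ∫ x, g x ∂μ = 1)
    (D : X → ℝ) (hDm : Measurable D) (hD : ∀ x, D x ∈ Set.Ioo (0 : ℝ) 1)
    (hint : Integrable (fun x => f x * Real.log (D x) + g x * Real.log (1 - D x)) μ)
    (hintstar : Integrable (fun x =>
      f x * Real.log (f x / (f x + g x)) + g x * Real.log (1 - f x / (f x + g x))) μ) :
    ∫ x, (f x * Real.log (D x) + g x * Real.log (1 - D x)) ∂μ ≤
      ∫ x, (f x * Real.log (f x / (f x + g x)) +
        g x * Real.log (1 - f x / (f x + g x))) ∂μ := by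
  exact integral_mono hint hintstar fun x =>
    gan_pointwise (f x) (g x) (D x) (hf x) (hg x) (hfg x) (hD x)
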